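/- Let 1 ≤ n' ≤ n, let α = {1,…,n'}, and let M be a matroid on N_n with r_M(N_n) ≥ 2 whose rank function spans an extreme ray of Γ_n. Suppose M has a circuit C = {x, y, z} with x, y ∈ α and z ∉ α, and suppose there exists i ∈ α \ {x, y} that is a loop of M. If a, b > 0 and a·r_M + b·r_{U_{1,α}} is entropic, then a = log v for some integer v ≥ 2. -/

import Mathlib

open Finset

/-- Shannon entropy (natural log) of the random variable `X : Ω → S`
under the probability mass function `p : Ω → ℝ`. -/
noncomputable def Hent {Ω S : Type} [Fintype Ω] [DecidableEq S]
    (p : Ω → ℝ) (X : Ω → S) : ℝ :=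
  ∑ s ∈ Finset.univ.image X,
    Real.negMulLog (∑ ω ∈ Finset.univ.filter (fun ω => X ω = s), p ω)

/-- The joint random variable `(X_i)_{i ∈ A}`. -/
def joint {Ω : Type} {n : ℕ} (X : Fin n → Ω → ℕ) (A : Finset (Fin n)) :
    Ω → (A → ℕ) :=
  fun ω i => X i ω

/-- A set function `h : 2^{N_n} → ℝ` is entropic if it is the entropy function of
some random vector `(X_1, …, X_n)` on a finite probability space. -/
def IsEntropic {n : ℕ} (h : Finset (Fin n) → ℝ) : Prop :=
  ∃ (N : ℕ) (p : Fin N → ℝ) (X : Fin n → Fin N → ℕ),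
    (∀ ω, 0 ≤ p ω) ∧ (∑ ω, p ω) = 1 ∧
    ∀ A : Finset (Fin n), h A = Hent p (joint X A)

/-- The polymatroidal region Γ_n. -/
def PolymatroidRegion (n : ℕ) : Set (Finset (Fin n) → ℝ) :=
  {h | h ∅ = 0 ∧ (∀ A, 0 ≤ h A) ∧ (∀ A B, A ⊆ B → h A ≤ h B) ∧
       (∀ A B, h (A ∩ B) + h (A ∪ B) ≤ h A + h B)}

/-- A nonzero `h ∈ Γ_n` spans an extreme ray of `Γ_n` if whenever `h₁, h₂ ∈ Γ_n` and
`h₁ + h₂` is a nonnegative multiple of `h`, both `h₁` and `h₂` are nonnegative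
multiples of `h`. -/
def SpansExtremeRay {n : ℕ} (h : Finset (Fin n) → ℝ) : Prop :=
  h ∈ PolymatroidRegion n ∧ h ≠ 0 ∧
  ∀ h₁ h₂ : Finset (Fin n) → ℝ, h₁ ∈ PolymatroidRegion n → h₂ ∈ PolymatroidRegion n →
    (∃ c : ℝ, 0 ≤ c ∧ h₁ + h₂ = c • h) →
    (∃ c₁ : ℝ, 0 ≤ c₁ ∧ h₁ = c₁ • h) ∧ (∃ c₂ : ℝ, 0 ≤ c₂ ∧ h₂ = c₂ • h)

/-- `F ⊆ Γ_n` is a face of `Γ_n` if whenever `h₁, h₂ ∈ Γ_n` and `h₁ + h₂ ∈ F`,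
both `h₁` and `h₂` lie in `F`. -/
def IsFace (n : ℕ) (F : Set (Finset (Fin n) → ℝ)) : Prop :=
  F ⊆ PolymatroidRegion n ∧
  ∀ h₁ h₂ : Finset (Fin n) → ℝ, h₁ ∈ PolymatroidRegion n → h₂ ∈ PolymatroidRegion n →
    h₁ + h₂ ∈ F → h₁ ∈ F ∧ h₂ ∈ F

/-- A matroid on ground set `N_n`, given by its rank function. -/
structure MatroidRk (n : ℕ) where
  r : Finset (Fin n) → ℕ
  le_card : ∀ A, r A ≤ A.card
  mono : ∀ ⦃A B : Finset (Fin n)⦄, A ⊆ B → r A ≤ r B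
  submod : ∀ A B : Finset (Fin n), r (A ∩ B) + r (A ∪ B) ≤ r A + r B

/-- The rank function of a matroid, viewed as a real-valued set function. -/
def MatroidRk.rr {n : ℕ} (M : MatroidRk n) : Finset (Fin n) → ℝ :=
  fun A => (M.r A : ℝ)

/-- A set is independent if its rank equals its cardinality. -/
def MatroidRk.Indep {n : ℕ} (M : MatroidRk n) (A : Finset (Fin n)) : Prop :=
  M.r A = A.card

/-- A circuit is a minimal dependent set. -/
def MatroidRk.IsCircuit {n : ℕ} (M : MatroidRk n) (C : Finset (Fin n)) : Prop :=
  ¬ M.Indep C ∧ ∀ A ⊂ C, M.Indep A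

/-- An element is a loop if its rank is zero. -/
def MatroidRk.IsLoop {n : ℕ} (M : MatroidRk n) (e : Fin n) : Prop :=
  M.r {e} = 0

/-- Two distinct elements are parallel if each has rank one and together they have rank one. -/
def MatroidRk.Parallel {n : ℕ} (M : MatroidRk n) (e f : Fin n) : Prop :=
  e ≠ f ∧ M.r {e} = 1 ∧ M.r {f} = 1 ∧ M.r {e, f} = 1

/-- The subset `{1, …, k}` of `N_n` (in `Fin n`, the elements with value `< k`). -/
def alphaSet (n k : ℕ) : Finset (Fin n) :=
  Finset.univ.filter (fun i => (i : ℕ) < k)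

/-- The rank function of the rank-one matroid `U_{1,k}^n`:
`A ↦ 1` if `A ∩ {1, …, k} ≠ ∅` and `0` otherwise. -/
def rUone (n k : ℕ) : Finset (Fin n) → ℝ :=
  fun A => if (A ∩ alphaSet n k).Nonempty then 1 else 0

/-- The rank function of the uniform matroid `U_{n-1,n}`: `A ↦ min (n-1) |A|`. -/
def rUnif (n : ℕ) : Finset (Fin n) → ℝ :=
  fun A => ((min (n - 1) A.card : ℕ) : ℝ)

/-- The p-characteristic set `χ_M` of a matroid `M`. -/
def chi {n : ℕ} (M : MatroidRk n) : Set ℤ :=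
  {v | 2 ≤ v ∧ IsEntropic (fun A => Real.log (v : ℝ) * M.rr A)}

section Tools
variable {Ω : Type} [Fintype Ω]

noncomputable def pr {S : Type} [DecidableEq S] (p : Ω → ℝ) (V : Ω → S) (s : S) : ℝ :=
  ∑ ω ∈ Finset.univ.filter (fun ω => V ω = s), p ω

variable {S T S₂ : Type} [DecidableEq S] [DecidableEq T] [DecidableEq S₂] {p : Ω → ℝ}

lemma pr_nonneg (hp0 : ∀ ω, 0 ≤ p ω) (V : Ω → S) (s : S) : 0 ≤ pr p V s :=
  Finset.sum_nonneg fun ω _ => hp0 ω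

lemma p_le_pr (hp0 : ∀ ω, 0 ≤ p ω) (V : Ω → S) (ω : Ω) : p ω ≤ pr p V (V ω) :=
  Finset.single_le_sum (fun ω _ => hp0 ω) (by simp)

lemma pr_pos (hp0 : ∀ ω, 0 ≤ p ω) (V : Ω → S) {ω : Ω} (h : 0 < p ω) :
    0 < pr p V (V ω) := lt_of_lt_of_le h (p_le_pr hp0 V ω)

lemma pr_le_pr_ae (hp0 : ∀ ω, 0 ≤ p ω) {Q1 Q2 : Ω → Prop} [DecidablePred Q1] [DecidablePred Q2]
    (h : ∀ ω, 0 < p ω → Q1 ω → Q2 ω) :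
    ∑ ω ∈ Finset.univ.filter Q1, p ω ≤ ∑ ω ∈ Finset.univ.filter Q2, p ω := by
  classical
  have hsplit := Finset.sum_filter_add_sum_filter_not (Finset.univ.filter Q1) Q2 p
  have h2 : ∑ ω ∈ (Finset.univ.filter Q1).filter (fun ω => ¬ Q2 ω), p ω = 0 := by
    apply Finset.sum_eq_zero
    intro ω hω
    simp only [Finset.mem_filter, Finset.mem_univ, true_and] at hω
    rcases lt_or_eq_of_le (hp0 ω) with hlt | heq
    · exact absurd (h ω hlt hω.1) hω.2
    · exact heq.symm
  have h3 : (Finset.univ.filter Q1).filter (fun ω => Q2 ω) ⊆ Finset.univ.filter Q2 := by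
    intro ω hω; simp only [Finset.mem_filter] at hω ⊢; exact ⟨hω.1.1, hω.2⟩
  calc ∑ ω ∈ Finset.univ.filter Q1, p ω
      = ∑ ω ∈ (Finset.univ.filter Q1).filter (fun ω => Q2 ω), p ω := by
        rw [← hsplit, h2, add_zero]
    _ ≤ ∑ ω ∈ Finset.univ.filter Q2, p ω :=
        Finset.sum_le_sum_of_subset_of_nonneg h3 (fun ω _ _ => hp0 ω)

lemma pr_eq_pr_ae (hp0 : ∀ ω, 0 ≤ p ω) {Q1 Q2 : Ω → Prop} [DecidablePred Q1] [DecidablePred Q2]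
    (h12 : ∀ ω, 0 < p ω → Q1 ω → Q2 ω) (h21 : ∀ ω, 0 < p ω → Q2 ω → Q1 ω) :
    ∑ ω ∈ Finset.univ.filter Q1, p ω = ∑ ω ∈ Finset.univ.filter Q2, p ω :=
  le_antisymm (pr_le_pr_ae hp0 h12) (pr_le_pr_ae hp0 h21)

lemma pr_le_one (hp0 : ∀ ω, 0 ≤ p ω) (hp1 : ∑ ω, p ω = 1) (V : Ω → S) (s : S) :
    pr p V s ≤ 1 := by
  rw [← hp1]
  exact Finset.sum_le_sum_of_subset_of_nonneg (Finset.filter_subset _ _) (fun ω _ _ => hp0 ω)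

lemma exists_pos_of_pr_pos (hp0 : ∀ ω, 0 ≤ p ω) {V : Ω → S} {s : S} (h : 0 < pr p V s) :
    ∃ ω, 0 < p ω ∧ V ω = s := by
  by_contra hc
  push_neg at hc
  have : pr p V s = 0 := by
    apply Finset.sum_eq_zero
    intro ω hω
    simp only [Finset.mem_filter, Finset.mem_univ, true_and] at hω
    rcases lt_or_eq_of_le (hp0 ω) with hlt | heq
    · exact absurd hω (hc ω hlt)
    · exact heq.symm
  rw [this] at h; exact lt_irrefl _ h

lemma pr_eq_zero_of_never {V : Ω → S} {s : S} (h : ∀ ω, V ω ≠ s) : pr p V s = 0 :=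
  Finset.sum_eq_zero fun ω hω =>
    absurd ((Finset.mem_filter.mp hω).2) (h ω)

lemma sum_group (p : Ω → ℝ) (V : Ω → S) (g : S → ℝ) :
    ∑ ω, p ω * g (V ω) = ∑ s ∈ Finset.univ.image V, pr p V s * g s := by
  rw [← Finset.sum_fiberwise_of_maps_to (fun ω _ => Finset.mem_image_of_mem V (Finset.mem_univ ω))
    (fun ω => p ω * g (V ω))]
  apply Finset.sum_congr rfl
  intro s _
  rw [pr, Finset.sum_mul]
  apply Finset.sum_congr rfl
  intro ω hω
  simp only [Finset.mem_filter] at hω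
  rw [hω.2]

lemma sum_pr (hp1 : ∑ ω, p ω = 1) (V : Ω → S) :
    ∑ s ∈ Finset.univ.image V, pr p V s = 1 := by
  have := sum_group p V (fun _ => (1 : ℝ))
  simpa [hp1] using this.symm

lemma Hent_eq_sum_omega (V : Ω → S) :
    Hent p V = ∑ ω, p ω * (-Real.log (pr p V (V ω))) := by
  rw [sum_group p V (fun s => -Real.log (pr p V s))]
  apply Finset.sum_congr rfl
  intro s _
  rw [Real.negMulLog]
  show -(pr p V s) * Real.log (pr p V s) = _
  ring

lemma pr_comp_of_injective (V : Ω → S) (e : S → T) (he : Function.Injective e) (s : S) :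
    pr p (fun ω => e (V ω)) (e s) = pr p V s := by
  unfold pr
  congr 1
  apply Finset.filter_congr
  intro ω _
  simp only [he.eq_iff]

lemma Hent_comp_of_injective (V : Ω → S) (e : S → T)
    (he : Function.Injective e) : Hent p (fun ω => e (V ω)) = Hent p V := by
  rw [Hent_eq_sum_omega, Hent_eq_sum_omega]
  apply Finset.sum_congr rfl
  intro ω _
  rw [pr_comp_of_injective V e he]

/-- marginalization: summing a pair probability over the first coordinate. -/
lemma marginal_fst (p : Ω → ℝ) (U : Ω → S) (Wv : Ω → T) (w : T) :
    ∑ u ∈ Finset.univ.image U, pr p (fun ω => (U ω, Wv ω)) (u, w) = pr p Wv w := by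
  unfold pr
  rw [← Finset.sum_fiberwise_of_maps_to
    (s := Finset.univ.filter (fun ω => Wv ω = w)) (t := Finset.univ.image U) (g := U)
    (fun ω _ => Finset.mem_image_of_mem U (Finset.mem_univ ω)) p]
  apply Finset.sum_congr rfl
  intro u _
  rw [Finset.filter_filter]
  congr 1
  ext ω
  simp [Prod.ext_iff, and_comm]

lemma marginal_pair (p : Ω → ℝ) (U : Ω → S) (V : Ω → S₂) (Wv : Ω → T) (w : T) :
    ∑ uv ∈ (Finset.univ.image U) ×ˢ (Finset.univ.image V),
      pr p (fun ω => (U ω, V ω, Wv ω)) (uv.1, uv.2, w) = pr p Wv w := by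
  unfold pr
  rw [← Finset.sum_fiberwise_of_maps_to
    (s := Finset.univ.filter (fun ω => Wv ω = w))
    (t := (Finset.univ.image U) ×ˢ (Finset.univ.image V)) (g := fun ω => (U ω, V ω))
    (fun ω _ => Finset.mem_product.mpr
      ⟨Finset.mem_image_of_mem U (Finset.mem_univ ω), Finset.mem_image_of_mem V (Finset.mem_univ ω)⟩) p]
  apply Finset.sum_congr rfl
  intro uv _
  rw [Finset.filter_filter]
  congr 1
  ext ω
  simp [Prod.ext_iff]
  tauto

/-- If `H(U,V) = H(U)` then `V` is a.s. determined by `U`. -/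
lemma determines_of_Hent_eq (hp0 : ∀ ω, 0 ≤ p ω) (hp1 : ∑ ω, p ω = 1)
    (U : Ω → S) (V : Ω → T)
    (hH : Hent p (fun ω => (U ω, V ω)) = Hent p U) :
    ∀ ω ω', 0 < p ω → 0 < p ω' → U ω = U ω' → V ω = V ω' := by
  classical
  set PU : Ω → S × T := fun ω => (U ω, V ω) with hPU
  have hle : ∀ ω, pr p PU (PU ω) ≤ pr p U (U ω) := by
    intro ω
    apply pr_le_pr_ae hp0
    intro ω' _ h'
    have : U ω' = U ω := congrArg Prod.fst h'
    exact this
  have hterm : ∀ ω ∈ Finset.univ (α := Ω),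
      p ω * (-Real.log (pr p U (U ω))) ≤ p ω * (-Real.log (pr p PU (PU ω))) := by
    intro ω _
    rcases lt_or_eq_of_le (hp0 ω) with hpos | heq
    · apply mul_le_mul_of_nonneg_left _ (hp0 ω)
      have h1 : 0 < pr p PU (PU ω) := pr_pos hp0 PU hpos
      have := Real.log_le_log h1 (hle ω)
      linarith
    · rw [← heq]; simp
  have hsums : ∑ ω, p ω * (-Real.log (pr p U (U ω)))
      = ∑ ω, p ω * (-Real.log (pr p PU (PU ω))) := by
    rw [← Hent_eq_sum_omega, ← Hent_eq_sum_omega, hH]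
  have heq := (Finset.sum_eq_sum_iff_of_le hterm).mp hsums
  have hkey : ∀ ω, 0 < p ω → pr p PU (PU ω) = pr p U (U ω) := by
    intro ω hpos
    have h := heq ω (Finset.mem_univ ω)
    have h2 : -Real.log (pr p U (U ω)) = -Real.log (pr p PU (PU ω)) :=
      mul_left_cancel₀ (ne_of_gt hpos) h
    have h1 : 0 < pr p PU (PU ω) := pr_pos hp0 PU hpos
    have h3 : 0 < pr p U (U ω) := pr_pos hp0 U hpos
    have := Real.log_injOn_pos (Set.mem_Ioi.mpr h1) (Set.mem_Ioi.mpr h3) (by linarith)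
    exact this
  -- disjointness argument
  intro ω ω' hω hω' hU
  by_contra hV
  have h1 : pr p PU (PU ω) = pr p U (U ω) := hkey ω hω
  have h2 : pr p PU (PU ω') = pr p U (U ω) := by rw [hkey ω' hω', hU]
  have hdisj : Disjoint (Finset.univ.filter (fun ω'' => PU ω'' = PU ω))
      (Finset.univ.filter (fun ω'' => PU ω'' = PU ω')) := by
    rw [Finset.disjoint_left]
    intro ω'' ha hb
    simp only [Finset.mem_filter, Finset.mem_univ, true_and] at ha hb
    rw [ha] at hb
    exact hV (congrArg Prod.snd hb)
  have hsub : (Finset.univ.filter (fun ω'' => PU ω'' = PU ω)) ∪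
      (Finset.univ.filter (fun ω'' => PU ω'' = PU ω')) ⊆
      Finset.univ.filter (fun ω'' => U ω'' = U ω) := by
    intro ω'' h
    rcases Finset.mem_union.mp h with h | h
    · simp only [Finset.mem_filter, Finset.mem_univ, true_and] at h ⊢
      exact congrArg Prod.fst h
    · simp only [Finset.mem_filter, Finset.mem_univ, true_and] at h ⊢
      rw [hU]; exact congrArg Prod.fst h
  have hsum : pr p PU (PU ω) + pr p PU (PU ω') ≤ pr p U (U ω) := by
    unfold pr
    rw [← Finset.sum_union hdisj]
    exact Finset.sum_le_sum_of_subset_of_nonneg hsub (fun _ _ _ => hp0 _)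
  have hpos : 0 < pr p U (U ω) := pr_pos hp0 U hω
  rw [h1, h2] at hsum
  linarith

/-- If `H(U,W) + H(V,W) = H(U,V,W) + H(W)` then `U` and `V` are conditionally
independent given `W`, including the product formula at all value triples. -/
lemma condindep_of_Hent {S1 S2 S3 : Type} [DecidableEq S1] [DecidableEq S2] [DecidableEq S3]
    (hp0 : ∀ ω, 0 ≤ p ω) (hp1 : ∑ ω, p ω = 1)
    (U : Ω → S1) (V : Ω → S2) (Wv : Ω → S3)
    (hH : Hent p (fun ω => (U ω, Wv ω)) + Hent p (fun ω => (V ω, Wv ω))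
      = Hent p (fun ω => (U ω, V ω, Wv ω)) + Hent p Wv) :
    ∀ u v w, pr p (fun ω => (U ω, Wv ω)) (u, w) * pr p (fun ω => (V ω, Wv ω)) (v, w)
      = pr p (fun ω => (U ω, V ω, Wv ω)) (u, v, w) * pr p Wv w := by
  classical
  set PU : Ω → S1 × S3 := fun ω => (U ω, Wv ω) with hPUdef
  set PV : Ω → S2 × S3 := fun ω => (V ω, Wv ω) with hPVdef
  set PT : Ω → S1 × S2 × S3 := fun ω => (U ω, V ω, Wv ω) with hPTdef
  set qU : S1 × S3 → ℝ := pr p PU with hqUdef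
  set qV : S2 × S3 → ℝ := pr p PV with hqVdef
  set qT : S1 × S2 × S3 → ℝ := pr p PT with hqTdef
  set qW : S3 → ℝ := pr p Wv with hqWdef
  set g : S1 × S2 × S3 → ℝ :=
    fun s => qU (s.1, s.2.2) * qV (s.2.1, s.2.2) / (qT s * qW s.2.2) with hgdef
  set G : S1 × S2 × S3 → ℝ :=
    fun s => qU (s.1, s.2.2) * qV (s.2.1, s.2.2) / qW s.2.2 with hGdef
  -- basic nonnegativity
  have hqU0 : ∀ s, 0 ≤ qU s := fun s => pr_nonneg hp0 PU s
  have hqV0 : ∀ s, 0 ≤ qV s := fun s => pr_nonneg hp0 PV s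
  have hqT0 : ∀ s, 0 ≤ qT s := fun s => pr_nonneg hp0 PT s
  have hqW0 : ∀ s, 0 ≤ qW s := fun s => pr_nonneg hp0 Wv s
  have hG0 : ∀ s, 0 ≤ G s := fun s =>
    div_nonneg (mul_nonneg (hqU0 _) (hqV0 _)) (hqW0 _)
  -- pair prob below marginal
  have hUle : ∀ u w, qU (u, w) ≤ qW w := by
    intro u w
    apply pr_le_pr_ae hp0
    intro ω _ h
    exact congrArg Prod.snd h
  have hVle : ∀ v w, qV (v, w) ≤ qW w := by
    intro v w
    apply pr_le_pr_ae hp0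
    intro ω _ h
    exact congrArg Prod.snd h
  -- Step A : ∑ ω, p ω * (-log (g (PT ω))) = 0
  have hstepA : ∑ ω, p ω * (-Real.log (g (PT ω))) = 0 := by
    have expand : ∀ ω, p ω * (-Real.log (g (PT ω)))
        = p ω * (-Real.log (qU (PU ω))) + p ω * (-Real.log (qV (PV ω)))
          - p ω * (-Real.log (qT (PT ω))) - p ω * (-Real.log (qW (Wv ω))) := by
      intro ω
      rcases lt_or_eq_of_le (hp0 ω) with hpos | heq
      · have h1 : 0 < qU (PU ω) := pr_pos hp0 PU hpos
        have h2 : 0 < qV (PV ω) := pr_pos hp0 PV hpos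
        have h3 : 0 < qT (PT ω) := pr_pos hp0 PT hpos
        have h4 : 0 < qW (Wv ω) := pr_pos hp0 Wv hpos
        have hlog : Real.log (g (PT ω))
            = Real.log (qU (PU ω)) + Real.log (qV (PV ω))
              - (Real.log (qT (PT ω)) + Real.log (qW (Wv ω))) := by
          show Real.log (qU (U ω, Wv ω) * qV (V ω, Wv ω) / (qT (PT ω) * qW (Wv ω))) = _
          rw [Real.log_div (by positivity) (by positivity),
            Real.log_mul (ne_of_gt h1) (ne_of_gt h2),
            Real.log_mul (ne_of_gt h3) (ne_of_gt h4)]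
        rw [hlog]; ring
      · rw [← heq]; ring
    calc ∑ ω, p ω * (-Real.log (g (PT ω)))
        = ∑ ω, (p ω * (-Real.log (qU (PU ω))) + p ω * (-Real.log (qV (PV ω)))
          - p ω * (-Real.log (qT (PT ω))) - p ω * (-Real.log (qW (Wv ω)))) :=
          Finset.sum_congr rfl (fun ω _ => expand ω)
      _ = (∑ ω, p ω * (-Real.log (qU (PU ω)))) + (∑ ω, p ω * (-Real.log (qV (PV ω))))
          - (∑ ω, p ω * (-Real.log (qT (PT ω)))) - (∑ ω, p ω * (-Real.log (qW (Wv ω)))) := by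
          rw [← Finset.sum_add_distrib, ← Finset.sum_sub_distrib, ← Finset.sum_sub_distrib]
      _ = Hent p PU + Hent p PV - Hent p PT - Hent p Wv := by
          rw [Hent_eq_sum_omega (p := p) PU, Hent_eq_sum_omega (p := p) PV,
            Hent_eq_sum_omega (p := p) PT, Hent_eq_sum_omega (p := p) Wv]
      _ = 0 := by
          have := hH; linarith
  -- Step B
  have hSiggroup : ∑ ω, p ω * g (PT ω) = ∑ s ∈ Finset.univ.image PT, qT s * g s :=
    sum_group p PT g
  have hinner : ∀ w ∈ Finset.univ.image Wv,
      ∑ s ∈ (Finset.univ.image PT).filter (fun s => s.2.2 = w), G s ≤ qW w := by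
    intro w _
    rcases eq_or_lt_of_le (hqW0 w) with hw0 | hwpos
    · have hz : ∀ s ∈ (Finset.univ.image PT).filter (fun s => s.2.2 = w), G s = 0 := by
        intro s hs
        simp only [Finset.mem_filter] at hs
        have h1 : qU (s.1, s.2.2) = 0 :=
          le_antisymm (by rw [hs.2, hw0]; exact hUle s.1 w) (hqU0 _)
        simp [hGdef, h1]
      rw [Finset.sum_eq_zero hz]
      exact hqW0 w
    · -- map the fiber into imU ×ˢ imV
      have hcongr : ∑ s ∈ (Finset.univ.image PT).filter (fun s => s.2.2 = w), G s
          = ∑ s ∈ (Finset.univ.image PT).filter (fun s => s.2.2 = w),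
              (fun uv : S1 × S2 => qU (uv.1, w) * qV (uv.2, w) / qW w) ((fun s : S1 × S2 × S3 => (s.1, s.2.1)) s) := by
        apply Finset.sum_congr rfl
        intro s hs
        simp only [Finset.mem_filter] at hs
        simp only [hGdef, hs.2]
      have hinj : ∀ s ∈ (Finset.univ.image PT).filter (fun s => s.2.2 = w),
          ∀ s' ∈ (Finset.univ.image PT).filter (fun s => s.2.2 = w),
          (fun s : S1 × S2 × S3 => (s.1, s.2.1)) s = (fun s : S1 × S2 × S3 => (s.1, s.2.1)) s' → s = s' := by
        intro s hs s' hs' hss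
        simp only [Finset.mem_filter] at hs hs'
        have hss' : (s.1, s.2.1) = (s'.1, s'.2.1) := hss
        have h1 : s.1 = s'.1 := (Prod.ext_iff.mp hss').1
        have h2 : s.2.1 = s'.2.1 := (Prod.ext_iff.mp hss').2
        have h3 : s.2.2 = s'.2.2 := by rw [hs.2, hs'.2]
        exact Prod.ext h1 (Prod.ext h2 h3)
      have himg := Finset.sum_image (s := (Finset.univ.image PT).filter (fun s => s.2.2 = w))
        (g := fun s : S1 × S2 × S3 => (s.1, s.2.1))
        (f := fun uv : S1 × S2 => qU (uv.1, w) * qV (uv.2, w) / qW w) (fun s hs s' hs' h => hinj s hs s' hs' h)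
      rw [hcongr, ← himg]
      have hsub : ((Finset.univ.image PT).filter (fun s => s.2.2 = w)).image
          (fun s : S1 × S2 × S3 => (s.1, s.2.1))
          ⊆ (Finset.univ.image U) ×ˢ (Finset.univ.image V) := by
        intro uv huv
        rcases Finset.mem_image.mp huv with ⟨s, hs, rfl⟩
        simp only [Finset.mem_filter] at hs
        rcases Finset.mem_image.mp hs.1 with ⟨ω, _, rfl⟩
        exact Finset.mem_product.mpr ⟨Finset.mem_image_of_mem U (Finset.mem_univ ω),
          Finset.mem_image_of_mem V (Finset.mem_univ ω)⟩
      calc _ ≤ ∑ uv ∈ (Finset.univ.image U) ×ˢ (Finset.univ.image V),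
            qU (uv.1, w) * qV (uv.2, w) / qW w :=
            Finset.sum_le_sum_of_subset_of_nonneg hsub
              (fun uv _ _ => div_nonneg (mul_nonneg (hqU0 _) (hqV0 _)) (hqW0 _))
        _ = qW w := by
            rw [← Finset.sum_div]
            rw [Finset.sum_product]
            have : ∑ u ∈ Finset.univ.image U, ∑ v ∈ Finset.univ.image V,
                qU (u, w) * qV (v, w)
                = (∑ u ∈ Finset.univ.image U, qU (u, w))
                  * (∑ v ∈ Finset.univ.image V, qV (v, w)) := by
              rw [Finset.sum_mul_sum]
            rw [this, marginal_fst p U Wv w, marginal_fst p V Wv w]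
            field_simp
            rfl
  have hSigle : ∑ ω, p ω * g (PT ω) ≤ 1 := by
    rw [hSiggroup]
    have h1 : ∑ s ∈ Finset.univ.image PT, qT s * g s ≤ ∑ s ∈ Finset.univ.image PT, G s := by
      apply Finset.sum_le_sum
      intro s hs
      rcases eq_or_lt_of_le (hqT0 s) with h0 | hpos
      · rw [← h0, zero_mul]; exact hG0 s
      · apply le_of_eq
        obtain ⟨ω, hω, hωs⟩ := exists_pos_of_pr_pos hp0 hpos
        have hqWpos : 0 < qW s.2.2 := by
          have : Wv ω = s.2.2 := by rw [← hωs]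
          rw [← this]
          exact pr_pos hp0 Wv hω
        show qT s * (qU (s.1, s.2.2) * qV (s.2.1, s.2.2) / (qT s * qW s.2.2)) = _
        rw [mul_comm (qT s) (qW s.2.2), ← div_div]
        rw [mul_div_cancel₀ _ (ne_of_gt hpos)]
    have h2 : ∑ s ∈ Finset.univ.image PT, G s ≤ 1 := by
      rw [← Finset.sum_fiberwise_of_maps_to
        (s := Finset.univ.image PT) (t := Finset.univ.image Wv) (g := fun s => s.2.2)
        (by
          intro s hs
          rcases Finset.mem_image.mp hs with ⟨ω, _, rfl⟩
          exact Finset.mem_image_of_mem Wv (Finset.mem_univ ω)) G]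
      calc _ ≤ ∑ w ∈ Finset.univ.image Wv, qW w := Finset.sum_le_sum hinner
        _ = 1 := sum_pr hp1 Wv
    linarith
  -- Step C
  have htermle : ∀ ω ∈ Finset.univ (α := Ω),
      p ω * (1 - g (PT ω)) ≤ p ω * (-Real.log (g (PT ω))) := by
    intro ω _
    rcases lt_or_eq_of_le (hp0 ω) with hpos | heq
    · apply mul_le_mul_of_nonneg_left _ (hp0 ω)
      have hgpos : 0 < g (PT ω) := by
        have h1 : 0 < qU (PU ω) := pr_pos hp0 PU hpos
        have h2 : 0 < qV (PV ω) := pr_pos hp0 PV hpos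
        have h3 : 0 < qT (PT ω) := pr_pos hp0 PT hpos
        have h4 : 0 < qW (Wv ω) := pr_pos hp0 Wv hpos
        show 0 < qU (U ω, Wv ω) * qV (V ω, Wv ω) / (qT (PT ω) * qW (Wv ω))
        positivity
      have := Real.log_le_sub_one_of_pos hgpos
      linarith
    · rw [← heq]; simp
  have hsum_le : ∑ ω, p ω * (1 - g (PT ω)) ≤ 0 := by
    calc ∑ ω, p ω * (1 - g (PT ω)) ≤ ∑ ω, p ω * (-Real.log (g (PT ω))) :=
          Finset.sum_le_sum htermle
      _ = 0 := hstepA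
  have hkey1 : ∑ ω, p ω * (1 - g (PT ω)) = (∑ ω, p ω) - ∑ ω, p ω * g (PT ω) := by
    rw [← Finset.sum_sub_distrib]
    apply Finset.sum_congr rfl
    intro ω _
    ring
  have hSigge : 1 ≤ ∑ ω, p ω * g (PT ω) := by
    rw [hkey1, hp1] at hsum_le
    linarith
  have hSigeq : ∑ ω, p ω * g (PT ω) = 1 := le_antisymm hSigle hSigge
  -- termwise equality
  have hsums_eq : ∑ ω, p ω * (1 - g (PT ω)) = ∑ ω, p ω * (-Real.log (g (PT ω))) := by
    rw [hkey1, hp1, hSigeq, hstepA]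
    norm_num
  have hterm_eq := (Finset.sum_eq_sum_iff_of_le htermle).mp hsums_eq
  have hAtom : ∀ ω, 0 < p ω → qU (PU ω) * qV (PV ω) = qT (PT ω) * qW (Wv ω) := by
    intro ω hpos
    have h := hterm_eq ω (Finset.mem_univ ω)
    have h2 : 1 - g (PT ω) = -Real.log (g (PT ω)) := mul_left_cancel₀ (ne_of_gt hpos) h
    have h1 : 0 < qU (PU ω) := pr_pos hp0 PU hpos
    have h2' : 0 < qV (PV ω) := pr_pos hp0 PV hpos
    have h3 : 0 < qT (PT ω) := pr_pos hp0 PT hpos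
    have h4 : 0 < qW (Wv ω) := pr_pos hp0 Wv hpos
    have hgpos : 0 < g (PT ω) := by
      show 0 < qU (U ω, Wv ω) * qV (V ω, Wv ω) / (qT (PT ω) * qW (Wv ω))
      positivity
    have hg1 : g (PT ω) = 1 := by
      by_contra hne
      have := Real.log_lt_sub_one_of_pos hgpos hne
      linarith
    have : qU (U ω, Wv ω) * qV (V ω, Wv ω) / (qT (PT ω) * qW (Wv ω)) = 1 := hg1
    have hd : qT (PT ω) * qW (Wv ω) ≠ 0 := by positivity
    field_simp at this
    exact this
  -- final conclusion
  intro u v w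
  rcases eq_or_lt_of_le (hqW0 w) with hw0 | hwpos
  · have h1 : qU (u, w) = 0 := le_antisymm (by rw [hw0]; exact hUle u w) (hqU0 _)
    rw [h1, zero_mul, ← hw0, mul_zero]
  · -- sums over imU ×ˢ imV
    have hsum1 : ∑ uv ∈ (Finset.univ.image U) ×ˢ (Finset.univ.image V),
        qT (uv.1, uv.2, w) * qW w = qW w * qW w := by
      rw [← Finset.sum_mul, marginal_pair p U V Wv w]
    have hsum2 : ∑ uv ∈ (Finset.univ.image U) ×ˢ (Finset.univ.image V),
        qU (uv.1, w) * qV (uv.2, w) = qW w * qW w := by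
      have e1 : ∑ uv ∈ (Finset.univ.image U) ×ˢ (Finset.univ.image V),
          qU (uv.1, w) * qV (uv.2, w)
          = (∑ u ∈ Finset.univ.image U, qU (u, w)) * (∑ v ∈ Finset.univ.image V, qV (v, w)) := by
        rw [Finset.sum_mul_sum, Finset.sum_product]
      rw [e1, marginal_fst p U Wv w, marginal_fst p V Wv w]
    have htermle2 : ∀ uv ∈ (Finset.univ.image U) ×ˢ (Finset.univ.image V),
        qT (uv.1, uv.2, w) * qW w ≤ qU (uv.1, w) * qV (uv.2, w) := by
      intro uv _
      rcases eq_or_lt_of_le (hqT0 (uv.1, uv.2, w)) with h0 | hpos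
      · rw [← h0, zero_mul]
        exact mul_nonneg (hqU0 _) (hqV0 _)
      · obtain ⟨ω, hω, hωs⟩ := exists_pos_of_pr_pos hp0 hpos
        have hU : U ω = uv.1 := congrArg (fun s : S1 × S2 × S3 => s.1) hωs
        have hV : V ω = uv.2 := congrArg (fun s : S1 × S2 × S3 => s.2.1) hωs
        have hW : Wv ω = w := congrArg (fun s : S1 × S2 × S3 => s.2.2) hωs
        have := hAtom ω hω
        rw [show PU ω = (uv.1, w) by simp [hPUdef, hU, hW],
          show PV ω = (uv.2, w) by simp [hPVdef, hV, hW],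
          show PT ω = (uv.1, uv.2, w) by simp [hPTdef, hU, hV, hW], hW] at this
        linarith [this]
    have heqall := (Finset.sum_eq_sum_iff_of_le htermle2).mp (by rw [hsum1, hsum2])
    by_cases hu : u ∈ Finset.univ.image U
    · by_cases hv : v ∈ Finset.univ.image V
      · have := heqall (u, v) (Finset.mem_product.mpr ⟨hu, hv⟩)
        exact this.symm
      · have h1 : qV (v, w) = 0 := pr_eq_zero_of_never (by
          intro ω h
          exact hv (by
            have : V ω = v := congrArg Prod.fst h
            rw [← this]
            exact Finset.mem_image_of_mem V (Finset.mem_univ ω)))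
        have h2 : qT (u, v, w) = 0 := pr_eq_zero_of_never (by
          intro ω h
          exact hv (by
            have : V ω = v := congrArg (fun s : S1 × S2 × S3 => s.2.1) h
            rw [← this]
            exact Finset.mem_image_of_mem V (Finset.mem_univ ω)))
        rw [h1, h2, mul_zero, zero_mul]
    · have h1 : qU (u, w) = 0 := pr_eq_zero_of_never (by
        intro ω h
        exact hu (by
          have : U ω = u := congrArg Prod.fst h
          rw [← this]
          exact Finset.mem_image_of_mem U (Finset.mem_univ ω)))
      have h2 : qT (u, v, w) = 0 := pr_eq_zero_of_never (by
        intro ω h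
        exact hu (by
          have : U ω = u := congrArg (fun s : S1 × S2 × S3 => s.1) h
          rw [← this]
          exact Finset.mem_image_of_mem U (Finset.mem_univ ω)))
      rw [h1, h2, zero_mul, zero_mul]


end Tools


section JJ
variable {Ω : Type} [Fintype Ω] {n : ℕ} (p : Ω → ℝ) (X : Fin n → Ω → ℕ)

lemma hent_joint_single (j : Fin n) :
    Hent p (joint X {j}) = Hent p (X j) := by
  have hj : j ∈ ({j} : Finset (Fin n)) := Finset.mem_singleton_self j
  have he : Function.Injective (fun f : (({j} : Finset (Fin n)) : Type) → ℕ => f ⟨j, hj⟩) := by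
    intro f g hfg
    funext m
    obtain ⟨m, hm⟩ := m
    have hmj : m = j := Finset.mem_singleton.mp hm
    subst hmj
    exact hfg
  exact (Hent_comp_of_injective (p := p) (joint X {j}) _ he).symm

lemma hent_joint_pair (j k : Fin n) (hjk : j ≠ k) :
    Hent p (joint X {j, k}) = Hent p (fun ω => (X j ω, X k ω)) := by
  have hj : j ∈ ({j, k} : Finset (Fin n)) := by simp
  have hk : k ∈ ({j, k} : Finset (Fin n)) := by simp
  have he : Function.Injective
      (fun f : (({j, k} : Finset (Fin n)) : Type) → ℕ => (f ⟨j, hj⟩, f ⟨k, hk⟩)) := by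
    intro f g hfg
    have h1 : f ⟨j, hj⟩ = g ⟨j, hj⟩ := (Prod.ext_iff.mp hfg).1
    have h2 : f ⟨k, hk⟩ = g ⟨k, hk⟩ := (Prod.ext_iff.mp hfg).2
    funext m
    obtain ⟨m, hm⟩ := m
    rcases Finset.mem_insert.mp hm with hmj | hmk
    · subst hmj; exact h1
    · have hmk' : m = k := Finset.mem_singleton.mp hmk
      subst hmk'; exact h2
  exact (Hent_comp_of_injective (p := p) (joint X {j, k}) _ he).symm

lemma hent_joint_triple (j k l : Fin n) :
    Hent p (joint X {j, k, l}) = Hent p (fun ω => (X j ω, X k ω, X l ω)) := by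
  have hj : j ∈ ({j, k, l} : Finset (Fin n)) := by simp
  have hk : k ∈ ({j, k, l} : Finset (Fin n)) := by simp
  have hl : l ∈ ({j, k, l} : Finset (Fin n)) := by simp
  have he : Function.Injective
      (fun f : (({j, k, l} : Finset (Fin n)) : Type) → ℕ =>
        (f ⟨j, hj⟩, f ⟨k, hk⟩, f ⟨l, hl⟩)) := by
    intro f g hfg
    have h1 : f ⟨j, hj⟩ = g ⟨j, hj⟩ := (Prod.ext_iff.mp hfg).1
    have h2 : f ⟨k, hk⟩ = g ⟨k, hk⟩ := (Prod.ext_iff.mp (Prod.ext_iff.mp hfg).2).1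
    have h3 : f ⟨l, hl⟩ = g ⟨l, hl⟩ := (Prod.ext_iff.mp (Prod.ext_iff.mp hfg).2).2
    funext m
    obtain ⟨m, hm⟩ := m
    rcases Finset.mem_insert.mp hm with hmj | hm'
    · subst hmj; exact h1
    · rcases Finset.mem_insert.mp hm' with hmk | hml
      · subst hmk; exact h2
      · have hml' : m = l := Finset.mem_singleton.mp hml
        subst hml'; exact h3
  exact (Hent_comp_of_injective (p := p) (joint X {j, k, l}) _ he).symm

lemma hent_joint_quad (j k l m : Fin n) :
    Hent p (joint X {j, k, l, m})
      = Hent p (fun ω => ((X j ω, X k ω, X l ω), X m ω)) := by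
  have hj : j ∈ ({j, k, l, m} : Finset (Fin n)) := by simp
  have hk : k ∈ ({j, k, l, m} : Finset (Fin n)) := by simp
  have hl : l ∈ ({j, k, l, m} : Finset (Fin n)) := by simp
  have hm : m ∈ ({j, k, l, m} : Finset (Fin n)) := by simp
  have he : Function.Injective
      (fun f : (({j, k, l, m} : Finset (Fin n)) : Type) → ℕ =>
        ((f ⟨j, hj⟩, f ⟨k, hk⟩, f ⟨l, hl⟩), f ⟨m, hm⟩)) := by
    intro f g hfg
    have hA := (Prod.ext_iff.mp hfg).1
    have h4 : f ⟨m, hm⟩ = g ⟨m, hm⟩ := (Prod.ext_iff.mp hfg).2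
    have h1 : f ⟨j, hj⟩ = g ⟨j, hj⟩ := (Prod.ext_iff.mp hA).1
    have h2 : f ⟨k, hk⟩ = g ⟨k, hk⟩ := (Prod.ext_iff.mp (Prod.ext_iff.mp hA).2).1
    have h3 : f ⟨l, hl⟩ = g ⟨l, hl⟩ := (Prod.ext_iff.mp (Prod.ext_iff.mp hA).2).2
    funext q
    obtain ⟨q, hq⟩ := q
    rcases Finset.mem_insert.mp hq with h | h'
    · subst h; exact h1
    · rcases Finset.mem_insert.mp h' with h | h''
      · subst h; exact h2
      · rcases Finset.mem_insert.mp h'' with h | h'''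
        · subst h; exact h3
        · have : q = m := Finset.mem_singleton.mp h'''
          subst this; exact h4
  exact (Hent_comp_of_injective (p := p) (joint X {j, k, l, m}) _ he).symm

end JJ

set_option maxHeartbeats 2000000 in
/-- for `M` of rank `≥ 2` spanning an extreme ray of `Γ_n` with a circuit
`{x, y, z}` where `x, y ∈ α = {1,…,n'}`, `z ∉ α`, and a loop `i ∈ α \ {x, y}`, if
`a·r_M + b·r_{U_{1,α}}` is entropic with `a, b > 0`, then `a = log v` for some integer
`v ≥ 2`. -/
theorem stmt17 (n n' : ℕ) (hn'1 : 1 ≤ n') (hn'n : n' ≤ n)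
    (M : MatroidRk n) (hrk : 2 ≤ M.r Finset.univ) (hext : SpansExtremeRay M.rr)
    (x y z : Fin n) (hxy : x ≠ y)
    (hx : x ∈ alphaSet n n') (hy : y ∈ alphaSet n n') (hz : z ∉ alphaSet n n')
    (hC : M.IsCircuit {x, y, z})
    (i : Fin n) (hiα : i ∈ alphaSet n n') (hix : i ≠ x) (hiy : i ≠ y)
    (hloop : M.IsLoop i)
    (a b : ℝ) (ha : 0 < a) (hb : 0 < b)
    (hent : IsEntropic (fun A => a * M.rr A + b * rUone n n' A)) :
    ∃ v : ℤ, 2 ≤ v ∧ a = Real.log (v : ℝ) := by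
  classical
  obtain ⟨N, p, X, hp0, hp1, hE⟩ := hent
  have hE' : ∀ A : Finset (Fin n), a * M.rr A + b * rUone n n' A = Hent p (joint X A) := hE
  -- distinctness
  have hzx : z ≠ x := by intro h; exact hz (h ▸ hx)
  have hzy : z ≠ y := by intro h; exact hz (h ▸ hy)
  have hiz : i ≠ z := by intro h; exact hz (h ▸ hiα)
  have hxz : x ≠ z := hzx.symm
  have hyz : y ≠ z := hzy.symm
  have hxi : x ≠ i := hix.symm
  have hyi : y ≠ i := hiy.symm
  have hzi : z ≠ i := hiz.symm
  have hloop' : M.r {i} = 0 := hloop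
  -- ranks from the circuit
  have hcard3 : ({x, y, z} : Finset (Fin n)).card = 3 := by
    rw [Finset.card_insert_of_notMem (by simp [hxy, hxz]),
      Finset.card_insert_of_notMem (by simp [hyz]), Finset.card_singleton]
  have hPS : ∀ S : Finset (Fin n), S ⊆ {x, y, z} →
      (∃ w ∈ ({x, y, z} : Finset (Fin n)), w ∉ S) → M.r S = S.card := by
    intro S h1 h2
    exact hC.2 S ((Finset.ssubset_iff_of_subset h1).mpr h2)
  have hr_x : M.r {x} = 1 := by
    rw [hPS {x} (by intro u hu; simp at hu ⊢; tauto) ⟨z, by simp, by simp [hzx]⟩,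
      Finset.card_singleton]
  have hr_y : M.r {y} = 1 := by
    rw [hPS {y} (by intro u hu; simp at hu ⊢; tauto) ⟨z, by simp, by simp [hzy]⟩,
      Finset.card_singleton]
  have hr_z : M.r {z} = 1 := by
    rw [hPS {z} (by intro u hu; simp at hu ⊢; tauto) ⟨x, by simp, by simp [hxz]⟩,
      Finset.card_singleton]
  have hsub_xy : ({x, y} : Finset (Fin n)) ⊆ {x, y, z} := by
    intro u hu; simp at hu ⊢; tauto
  have hr_xy : M.r {x, y} = 2 := by
    rw [hPS {x, y} hsub_xy ⟨z, by simp, by simp [hzx, hzy]⟩,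
      Finset.card_insert_of_notMem (by simp [hxy]), Finset.card_singleton]
  have hr_xz : M.r {x, z} = 2 := by
    rw [hPS {x, z} (by intro u hu; simp at hu ⊢; tauto) ⟨y, by simp, by simp [hxy.symm, hyz]⟩,
      Finset.card_insert_of_notMem (by simp [hxz]), Finset.card_singleton]
  have hr_yz : M.r {y, z} = 2 := by
    rw [hPS {y, z} (by intro u hu; simp at hu ⊢; tauto) ⟨x, by simp, by simp [hxy, hxz]⟩,
      Finset.card_insert_of_notMem (by simp [hyz]), Finset.card_singleton]
  have hr_xyz : M.r {x, y, z} = 2 := by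
    have hub : M.r {x, y, z} ≤ 3 := by
      have := M.le_card {x, y, z}
      omega
    have hne : M.r {x, y, z} ≠ 3 := by
      intro h
      exact hC.1 (by rw [MatroidRk.Indep, h, hcard3])
    have hlb : 2 ≤ M.r {x, y, z} := by
      have := M.mono hsub_xy
      omega
    omega
  -- inserting the loop does not change rank
  have hrempty : M.r ∅ = 0 := Nat.le_zero.mp (by simpa using M.le_card ∅)
  have hins : ∀ S : Finset (Fin n), i ∉ S → M.r (insert i S) = M.r S := by
    intro S hiS
    have hsub := M.submod {i} S
    rw [Finset.singleton_inter_of_notMem hiS, ← Finset.insert_eq, hrempty, hloop'] at hsub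
    have hmono := M.mono (Finset.subset_insert i S)
    omega
  -- set identities
  have e_xi : ({x, i} : Finset (Fin n)) = insert i {x} := Finset.pair_comm x i
  have e_yi : ({y, i} : Finset (Fin n)) = insert i {y} := Finset.pair_comm y i
  have e_zi : ({z, i} : Finset (Fin n)) = insert i {z} := Finset.pair_comm z i
  have e_xyi : ({x, y, i} : Finset (Fin n)) = insert i {x, y} := by ext u; simp only [Finset.mem_insert, Finset.mem_singleton]; tauto
  have e_xzi : ({x, z, i} : Finset (Fin n)) = insert i {x, z} := by ext u; simp only [Finset.mem_insert, Finset.mem_singleton]; tauto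
  have e_yzi : ({y, z, i} : Finset (Fin n)) = insert i {y, z} := by ext u; simp only [Finset.mem_insert, Finset.mem_singleton]; tauto
  have e_q : ({i, x, z, y} : Finset (Fin n)) = insert i {x, y, z} := by ext u; simp only [Finset.mem_insert, Finset.mem_singleton]; tauto
  -- rank values of the sets we need
  have hr_i : M.r {i} = 0 := hloop'
  have hr_xi : M.r {x, i} = 1 := by rw [e_xi, hins {x} (by simp [hix]), hr_x]
  have hr_yi : M.r {y, i} = 1 := by rw [e_yi, hins {y} (by simp [hiy]), hr_y]
  have hr_zi : M.r {z, i} = 1 := by rw [e_zi, hins {z} (by simp [hiz]), hr_z]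
  have hr_xyi : M.r {x, y, i} = 2 := by rw [e_xyi, hins {x, y} (by simp [hix, hiy]), hr_xy]
  have hr_xzi : M.r {x, z, i} = 2 := by rw [e_xzi, hins {x, z} (by simp [hix, hiz]), hr_xz]
  have hr_yzi : M.r {y, z, i} = 2 := by rw [e_yzi, hins {y, z} (by simp [hiy, hiz]), hr_yz]
  have hr_ixy : M.r {i, x, y} = 2 := by
    rw [show ({i, x, y} : Finset (Fin n)) = insert i {x, y} from rfl,
      hins {x, y} (by simp [hix, hiy]), hr_xy]
  have hr_ixz : M.r {i, x, z} = 2 := by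
    rw [show ({i, x, z} : Finset (Fin n)) = insert i {x, z} from rfl,
      hins {x, z} (by simp [hix, hiz]), hr_xz]
  have hr_ixyz : M.r {i, x, y, z} = 2 := by
    rw [show ({i, x, y, z} : Finset (Fin n)) = insert i {x, y, z} from rfl,
      hins {x, y, z} (by simp [hix, hiy, hiz]), hr_xyz]
  have hr_ixzy : M.r {i, x, z, y} = 2 := by
    rw [e_q, hins {x, y, z} (by simp [hix, hiy, hiz]), hr_xyz]
  -- real-valued rank
  have hrr : ∀ (S : Finset (Fin n)) (k : ℕ), M.r S = k → M.rr S = (k : ℝ) := by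
    intro S k h
    show ((M.r S : ℕ) : ℝ) = (k : ℝ)
    rw [h]
  -- rUone values
  have hu_mem : ∀ S : Finset (Fin n), ∀ w ∈ S, w ∈ alphaSet n n' → rUone n n' S = 1 := by
    intro S w hw hwα
    show (if (S ∩ alphaSet n n').Nonempty then (1 : ℝ) else 0) = 1
    rw [if_pos ⟨w, Finset.mem_inter.mpr ⟨hw, hwα⟩⟩]
  have hu_z : rUone n n' {z} = 0 := by
    show (if (({z} : Finset (Fin n)) ∩ alphaSet n n').Nonempty then (1 : ℝ) else 0) = 0
    rw [if_neg]
    rintro ⟨w, hw⟩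
    rw [Finset.mem_inter, Finset.mem_singleton] at hw
    exact hz (hw.1 ▸ hw.2)
  -- entropy values
  have EW : Hent p (X i) = b := by
    have h := hE' {i}
    rw [hrr {i} 0 hr_i, hu_mem {i} i (Finset.mem_singleton_self i) hiα,
      hent_joint_single p X i] at h
    push_cast at h
    linarith
  have EC : Hent p (X z) = a := by
    have h := hE' {z}
    rw [hrr {z} 1 hr_z, hu_z, hent_joint_single p X z] at h
    push_cast at h
    linarith
  have EAW : Hent p (fun ω => (X x ω, X i ω)) = a + b := by
    have h := hE' {x, i}
    rw [hrr {x, i} 1 hr_xi, hu_mem {x, i} i (by simp) hiα, hent_joint_pair p X x i hxi] at h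
    push_cast at h
    linarith
  have EBW : Hent p (fun ω => (X y ω, X i ω)) = a + b := by
    have h := hE' {y, i}
    rw [hrr {y, i} 1 hr_yi, hu_mem {y, i} i (by simp) hiα, hent_joint_pair p X y i hyi] at h
    push_cast at h
    linarith
  have ECW : Hent p (fun ω => (X z ω, X i ω)) = a + b := by
    have h := hE' {z, i}
    rw [hrr {z, i} 1 hr_zi, hu_mem {z, i} i (by simp) hiα, hent_joint_pair p X z i hzi] at h
    push_cast at h
    linarith
  have EABW : Hent p (fun ω => (X x ω, X y ω, X i ω)) = 2 * a + b := by
    have h := hE' {x, y, i}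
    rw [hrr {x, y, i} 2 hr_xyi, hu_mem {x, y, i} i (by simp) hiα,
      hent_joint_triple p X x y i] at h
    push_cast at h
    linarith
  have EACW : Hent p (fun ω => (X x ω, X z ω, X i ω)) = 2 * a + b := by
    have h := hE' {x, z, i}
    rw [hrr {x, z, i} 2 hr_xzi, hu_mem {x, z, i} i (by simp) hiα,
      hent_joint_triple p X x z i] at h
    push_cast at h
    linarith
  have EBCW : Hent p (fun ω => (X y ω, X z ω, X i ω)) = 2 * a + b := by
    have h := hE' {y, z, i}
    rw [hrr {y, z, i} 2 hr_yzi, hu_mem {y, z, i} i (by simp) hiα,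
      hent_joint_triple p X y z i] at h
    push_cast at h
    linarith
  have EWAB : Hent p (fun ω => (X i ω, X x ω, X y ω)) = 2 * a + b := by
    have h := hE' {i, x, y}
    rw [hrr {i, x, y} 2 hr_ixy, hu_mem {i, x, y} i (by simp) hiα,
      hent_joint_triple p X i x y] at h
    push_cast at h
    linarith
  have EWAC : Hent p (fun ω => (X i ω, X x ω, X z ω)) = 2 * a + b := by
    have h := hE' {i, x, z}
    rw [hrr {i, x, z} 2 hr_ixz, hu_mem {i, x, z} i (by simp) hiα,
      hent_joint_triple p X i x z] at h
    push_cast at h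
    linarith
  have EQ1 : Hent p (fun ω => ((X i ω, X x ω, X y ω), X z ω)) = 2 * a + b := by
    have h := hE' {i, x, y, z}
    rw [hrr {i, x, y, z} 2 hr_ixyz, hu_mem {i, x, y, z} i (by simp) hiα,
      hent_joint_quad p X i x y z] at h
    push_cast at h
    linarith
  have EQ2 : Hent p (fun ω => ((X i ω, X x ω, X z ω), X y ω)) = 2 * a + b := by
    have h := hE' {i, x, z, y}
    rw [hrr {i, x, z, y} 2 hr_ixzy, hu_mem {i, x, z, y} i (by simp) hiα,
      hent_joint_quad p X i x z y] at h
    push_cast at h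
    linarith
  -- functional dependencies
  have hDetC := determines_of_Hent_eq hp0 hp1 (fun ω => (X i ω, X x ω, X y ω)) (X z)
    (by
      show Hent p (fun ω => ((X i ω, X x ω, X y ω), X z ω))
        = Hent p (fun ω => (X i ω, X x ω, X y ω))
      rw [EQ1, EWAB])
  have hDetB := determines_of_Hent_eq hp0 hp1 (fun ω => (X i ω, X x ω, X z ω)) (X y)
    (by
      show Hent p (fun ω => ((X i ω, X x ω, X z ω), X y ω))
        = Hent p (fun ω => (X i ω, X x ω, X z ω))
      rw [EQ2, EWAC])
  -- conditional independence
  have hCI_AB := condindep_of_Hent hp0 hp1 (X x) (X y) (X i)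
    (by
      show Hent p (fun ω => (X x ω, X i ω)) + Hent p (fun ω => (X y ω, X i ω))
        = Hent p (fun ω => (X x ω, X y ω, X i ω)) + Hent p (X i)
      rw [EAW, EBW, EABW, EW]; ring)
  have hCI_AC := condindep_of_Hent hp0 hp1 (X x) (X z) (X i)
    (by
      show Hent p (fun ω => (X x ω, X i ω)) + Hent p (fun ω => (X z ω, X i ω))
        = Hent p (fun ω => (X x ω, X z ω, X i ω)) + Hent p (X i)
      rw [EAW, ECW, EACW, EW]; ring)
  have hCI_BC := condindep_of_Hent hp0 hp1 (X y) (X z) (X i)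
    (by
      show Hent p (fun ω => (X y ω, X i ω)) + Hent p (fun ω => (X z ω, X i ω))
        = Hent p (fun ω => (X y ω, X z ω, X i ω)) + Hent p (X i)
      rw [EBW, ECW, EBCW, EW]; ring)
  -- independence of X_z and X_i, via a constant auxiliary variable
  have hpr_c0 : pr p (fun _ : Fin N => (0 : ℕ)) 0 = 1 := by
    show ∑ ω ∈ Finset.univ.filter (fun ω : Fin N => (0 : ℕ) = 0), p ω = 1
    rw [Finset.filter_true_of_mem (fun _ _ => rfl)]
    exact hp1
  have Ec0 : Hent p (fun _ : Fin N => (0 : ℕ)) = 0 := by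
    rw [Hent_eq_sum_omega]
    apply Finset.sum_eq_zero
    intro ω _
    rw [show pr p (fun _ : Fin N => (0 : ℕ)) 0 = 1 from hpr_c0]
    simp
  have injpair : Function.Injective (fun s : ℕ => (s, (0 : ℕ))) := by
    intro s t h
    exact (Prod.ext_iff.mp h).1
  have injtrip : Function.Injective (fun q : ℕ × ℕ => (q.1, q.2, (0 : ℕ))) := by
    intro q r h
    have h1 := (Prod.ext_iff.mp h).1
    have h2 := (Prod.ext_iff.mp (Prod.ext_iff.mp h).2).1
    exact Prod.ext h1 h2
  have hCWraw := condindep_of_Hent hp0 hp1 (X z) (X i) (fun _ : Fin N => (0 : ℕ))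
    (by
      show Hent p (fun ω => (X z ω, (0 : ℕ))) + Hent p (fun ω => (X i ω, (0 : ℕ)))
        = Hent p (fun ω => (X z ω, X i ω, (0 : ℕ))) + Hent p (fun _ : Fin N => (0 : ℕ))
      have h1 : Hent p (fun ω => (X z ω, (0 : ℕ))) = Hent p (X z) :=
        Hent_comp_of_injective (X z) (fun s : ℕ => (s, (0 : ℕ))) injpair
      have h2 : Hent p (fun ω => (X i ω, (0 : ℕ))) = Hent p (X i) :=
        Hent_comp_of_injective (X i) (fun s : ℕ => (s, (0 : ℕ))) injpair
      have h3 : Hent p (fun ω => (X z ω, X i ω, (0 : ℕ)))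
          = Hent p (fun ω => (X z ω, X i ω)) :=
        Hent_comp_of_injective (fun ω => (X z ω, X i ω))
          (fun q : ℕ × ℕ => (q.1, q.2, (0 : ℕ))) injtrip
      rw [h1, h2, h3, Ec0, EC, EW, ECW]; ring)
  have hCW : ∀ s t : ℕ, pr p (X z) s * pr p (X i) t
      = pr p (fun ω => (X z ω, X i ω)) (s, t) := by
    intro s t
    have h := hCWraw s t 0
    have h1 : pr p (fun ω => (X z ω, (0 : ℕ))) (s, 0) = pr p (X z) s :=
      pr_comp_of_injective (X z) (fun u : ℕ => (u, (0 : ℕ))) injpair s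
    have h2 : pr p (fun ω => (X i ω, (0 : ℕ))) (t, 0) = pr p (X i) t :=
      pr_comp_of_injective (X i) (fun u : ℕ => (u, (0 : ℕ))) injpair t
    have h3 : pr p (fun ω => (X z ω, X i ω, (0 : ℕ))) (s, t, 0)
        = pr p (fun ω => (X z ω, X i ω)) (s, t) :=
      pr_comp_of_injective (fun ω => (X z ω, X i ω))
        (fun q : ℕ × ℕ => (q.1, q.2, (0 : ℕ))) injtrip (s, t)
    rw [h1, h2, h3, hpr_c0, mul_one] at h
    exact h
  -- ============ the Latin-square argument ============
  obtain ⟨ω₀, hω₀⟩ : ∃ ω, 0 < p ω := by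
    by_contra hc
    push_neg at hc
    have : ∑ ω, p ω = 0 :=
      Finset.sum_eq_zero (fun ω _ => le_antisymm (hc ω) (hp0 ω))
    rw [hp1] at this
    norm_num at this
  set t : ℕ := X i ω₀ with ht
  have hpt : 0 < pr p (X i) t := pr_pos hp0 (X i) hω₀
  have key : ∀ ω₁, 0 < p ω₁ → X i ω₁ = t →
      pr p (fun ω => (X z ω, X i ω)) (X z ω₁, t)
        = pr p (fun ω => (X y ω, X i ω)) (X y ω₁, t) := by
    intro ω₁ h₁ hW₁
    have hAW : 0 < pr p (fun ω => (X x ω, X i ω)) (X x ω₁, t) := by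
      have h := pr_pos hp0 (fun ω => (X x ω, X i ω)) h₁
      have he : ((fun ω => (X x ω, X i ω)) ω₁) = (X x ω₁, t) := by
        show (X x ω₁, X i ω₁) = (X x ω₁, t)
        rw [hW₁]
      rw [hW₁] at h
      exact h
    have hevent : pr p (fun ω => (X x ω, X z ω, X i ω)) (X x ω₁, X z ω₁, t)
        = pr p (fun ω => (X x ω, X y ω, X i ω)) (X x ω₁, X y ω₁, t) := by
      apply pr_eq_pr_ae hp0
      · intro ω hω h'
        have h1 : X x ω = X x ω₁ := (Prod.ext_iff.mp h').1
        have h2 : X z ω = X z ω₁ := (Prod.ext_iff.mp (Prod.ext_iff.mp h').2).1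
        have h3 : X i ω = t := (Prod.ext_iff.mp (Prod.ext_iff.mp h').2).2
        have hB : X y ω = X y ω₁ := by
          apply hDetB ω ω₁ hω h₁
          show (X i ω, X x ω, X z ω) = (X i ω₁, X x ω₁, X z ω₁)
          rw [h1, h2, h3, hW₁]
        show (X x ω, X y ω, X i ω) = (X x ω₁, X y ω₁, t)
        rw [h1, hB, h3]
      · intro ω hω h'
        have h1 : X x ω = X x ω₁ := (Prod.ext_iff.mp h').1
        have h2 : X y ω = X y ω₁ := (Prod.ext_iff.mp (Prod.ext_iff.mp h').2).1
        have h3 : X i ω = t := (Prod.ext_iff.mp (Prod.ext_iff.mp h').2).2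
        have hCeq : X z ω = X z ω₁ := by
          apply hDetC ω ω₁ hω h₁
          show (X i ω, X x ω, X y ω) = (X i ω₁, X x ω₁, X y ω₁)
          rw [h1, h2, h3, hW₁]
        show (X x ω, X z ω, X i ω) = (X x ω₁, X z ω₁, t)
        rw [h1, hCeq, h3]
    have e1 := hCI_AC (X x ω₁) (X z ω₁) t
    have e2 := hCI_AB (X x ω₁) (X y ω₁) t
    apply mul_left_cancel₀ (ne_of_gt hAW)
    apply mul_right_cancel₀ (ne_of_gt hpt)
    calc pr p (fun ω => (X x ω, X i ω)) (X x ω₁, t)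
          * pr p (fun ω => (X z ω, X i ω)) (X z ω₁, t) * pr p (X i) t
        = pr p (fun ω => (X x ω, X z ω, X i ω)) (X x ω₁, X z ω₁, t) * pr p (X i) t
          * pr p (X i) t := by rw [e1]
      _ = pr p (fun ω => (X x ω, X y ω, X i ω)) (X x ω₁, X y ω₁, t) * pr p (X i) t
          * pr p (X i) t := by rw [hevent]
      _ = pr p (fun ω => (X x ω, X i ω)) (X x ω₁, t)
          * pr p (fun ω => (X y ω, X i ω)) (X y ω₁, t) * pr p (X i) t := by rw [← e2]
  have unif : ∀ s s' : ℕ, 0 < pr p (fun ω => (X z ω, X i ω)) (s, t) →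
      0 < pr p (fun ω => (X z ω, X i ω)) (s', t) →
      pr p (fun ω => (X z ω, X i ω)) (s, t) = pr p (fun ω => (X z ω, X i ω)) (s', t) := by
    intro s s' hs hs'
    obtain ⟨ω₁, h₁, hv₁⟩ := exists_pos_of_pr_pos hp0 hs
    have hC₁ : X z ω₁ = s := (Prod.ext_iff.mp hv₁).1
    have hW₁ : X i ω₁ = t := (Prod.ext_iff.mp hv₁).2
    have k1 := key ω₁ h₁ hW₁
    have hBW : 0 < pr p (fun ω => (X y ω, X i ω)) (X y ω₁, t) := by
      rw [← k1, hC₁]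
      exact hs
    have hBCW : 0 < pr p (fun ω => (X y ω, X z ω, X i ω)) (X y ω₁, s', t) := by
      have e3 := hCI_BC (X y ω₁) s' t
      have h4 : 0 < pr p (fun ω => (X y ω, X z ω, X i ω)) (X y ω₁, s', t) * pr p (X i) t := by
        rw [← e3]
        exact mul_pos hBW hs'
      nlinarith [pr_nonneg hp0 (fun ω => (X y ω, X z ω, X i ω)) (X y ω₁, s', t), hpt]
    obtain ⟨ω₃, h₃, hv₃⟩ := exists_pos_of_pr_pos hp0 hBCW
    have hB₃ : X y ω₃ = X y ω₁ := (Prod.ext_iff.mp hv₃).1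
    have hC₃ : X z ω₃ = s' := (Prod.ext_iff.mp (Prod.ext_iff.mp hv₃).2).1
    have hW₃ : X i ω₃ = t := (Prod.ext_iff.mp (Prod.ext_iff.mp hv₃).2).2
    have k3 := key ω₃ h₃ hW₃
    rw [hC₃, hB₃] at k3
    rw [k3, ← k1, hC₁]
  -- the distribution of X_z is constant on its support
  have hCWt : ∀ s : ℕ, pr p (fun ω => (X z ω, X i ω)) (s, t) = pr p (X z) s * pr p (X i) t :=
    fun s => (hCW s t).symm
  have hconst : ∀ s s' : ℕ, 0 < pr p (X z) s → 0 < pr p (X z) s' →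
      pr p (X z) s = pr p (X z) s' := by
    intro s s' hps hps'
    have h := unif s s' (by rw [hCWt]; exact mul_pos hps hpt)
      (by rw [hCWt]; exact mul_pos hps' hpt)
    rw [hCWt, hCWt] at h
    exact mul_right_cancel₀ (ne_of_gt hpt) h
  -- support of X_z
  set Sup : Finset ℕ := (Finset.univ.image (X z)).filter (fun s => 0 < pr p (X z) s)
    with hSup
  have hsupsum : ∑ s ∈ Sup, pr p (X z) s = 1 := by
    have h := sum_pr hp1 (X z)
    rw [← Finset.sum_filter_add_sum_filter_not (Finset.univ.image (X z))
      (fun s => 0 < pr p (X z) s) (pr p (X z))] at h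
    have hz0 : ∑ s ∈ (Finset.univ.image (X z)).filter (fun s => ¬ 0 < pr p (X z) s),
        pr p (X z) s = 0 := by
      apply Finset.sum_eq_zero
      intro s hs
      simp only [Finset.mem_filter] at hs
      exact le_antisymm (not_lt.mp hs.2) (pr_nonneg hp0 (X z) s)
    rw [hz0, add_zero] at h
    exact h
  have hSupne : Sup.Nonempty := by
    by_contra hne
    rw [Finset.not_nonempty_iff_eq_empty] at hne
    rw [hne, Finset.sum_empty] at hsupsum
    norm_num at hsupsum
  obtain ⟨s₀, hs₀⟩ := hSupne
  have hc_pos : 0 < pr p (X z) s₀ := (Finset.mem_filter.mp hs₀).2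
  set c : ℝ := pr p (X z) s₀ with hcdef
  have hconst' : ∀ s ∈ Sup, pr p (X z) s = c :=
    fun s hs => hconst s s₀ (Finset.mem_filter.mp hs).2 hc_pos
  set v : ℕ := Sup.card with hvdef
  have hvc : (v : ℝ) * c = 1 := by
    rw [← hsupsum, Finset.sum_congr rfl hconst', Finset.sum_const, nsmul_eq_mul]
  have hvne : (v : ℝ) ≠ 0 := by
    intro h
    rw [h, zero_mul] at hvc
    norm_num at hvc
  have hcinv : c = (v : ℝ)⁻¹ := by
    field_simp at hvc ⊢
    linarith
  -- compute the entropy of X_z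
  have hHC : Hent p (X z) = ∑ s ∈ Finset.univ.image (X z), Real.negMulLog (pr p (X z) s) :=
    rfl
  have hsplit : Hent p (X z) = ∑ s ∈ Sup, Real.negMulLog (pr p (X z) s) := by
    rw [hHC, ← Finset.sum_filter_add_sum_filter_not (Finset.univ.image (X z))
      (fun s => 0 < pr p (X z) s) (fun s => Real.negMulLog (pr p (X z) s))]
    have hz0 : ∑ s ∈ (Finset.univ.image (X z)).filter (fun s => ¬ 0 < pr p (X z) s),
        Real.negMulLog (pr p (X z) s) = 0 := by
      apply Finset.sum_eq_zero
      intro s hs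
      simp only [Finset.mem_filter] at hs
      rw [le_antisymm (not_lt.mp hs.2) (pr_nonneg hp0 (X z) s)]
      exact Real.negMulLog_zero
    rw [hz0, add_zero]
  have hHval : Hent p (X z) = (v : ℝ) * Real.negMulLog ((v : ℝ)⁻¹) := by
    rw [hsplit, Finset.sum_congr rfl (fun s hs => by rw [hconst' s hs, hcinv]),
      Finset.sum_const, nsmul_eq_mul]
  have hlogv : a = Real.log (v : ℝ) := by
    rw [← EC, hHval, Real.negMulLog, Real.log_inv]
    field_simp
  -- v ≥ 2
  have hv1 : v ≠ 0 := by
    intro h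
    rw [h] at hvne
    norm_num at hvne
  have hv2 : v ≠ 1 := by
    intro h
    rw [h] at hlogv
    norm_num at hlogv
    linarith
  refine ⟨(v : ℤ), ?_, ?_⟩
  · have : 2 ≤ v := by omega
    exact_mod_cast this
  · rw [hlogv]
    norm_num
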